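/- Let A be a finite set, m ≥ 1, and suppose A is partitioned into nonempty classes A_π (indexed by 'types' π) each of size at least 3mC for a constant C ≥ 1. Suppose each element a ∈ A_π must be assigned at most mC outgoing 'witnesses' in specified target classes A_ρ, where each target class requirement at a is a number n_{a,ρ} ≥ 0 with Σ_ρ n_{a,ρ} ≤ mC, and a witness assigned to a in class A_ρ must be an element of A_ρ not assigned as a witness to any other element and distinct from a. Then if each class A_π is partitioned into three subclasses A_{π,0}, A_{π,1}, A_{π,2} of size ≥ mC each, and each element of A_{π,j} takes its witnesses in class ρ only from A_{ρ, j+1 mod 3}, all requirements can be simultaneously satisfied: there is an injective-per-receiver assignment meeting every n_{a,ρ}. -/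

import Mathlib

/-- **Circular witnessing.**  Elements of a finite set `A` are partitioned into type
classes (via `typ`), each split into three blocks (via `blk`, valued in `ZMod 3`) of
size at least `m * C`.  Each element `a` requires `n a ρ` witnesses of type `ρ`, with
at most `m * C` witnesses required in total, and an element of block `j` must draw its
witnesses of type `ρ` from block `j + 1` of class `ρ`.  Then all requirements can be
simultaneously satisfied: witnesses of a single source are pairwise distinct and
distinct from the source, lie in the prescribed class and block, and no two elements
ever serve as witnesses of one another. -/
theorem circular_witnessing {A T : Type*} [Fintype A] [DecidableEq A]
    [Fintype T] [DecidableEq T]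
    (m C : ℕ) (hm : 1 ≤ m) (hC : 1 ≤ C)
    (typ : A → T) (blk : A → ZMod 3)
    (hblk : ∀ (π : T) (j : ZMod 3),
      m * C ≤ (Finset.univ.filter (fun x : A => typ x = π ∧ blk x = j)).card)
    (n : A → T → ℕ) (hn : ∀ a : A, (∑ ρ : T, n a ρ) ≤ m * C) :
    ∃ w : A → T → Finset A,
      (∀ (a : A) (ρ : T), (w a ρ).card = n a ρ) ∧
      (∀ (a : A) (ρ : T), ∀ x ∈ w a ρ, typ x = ρ ∧ blk x = blk a + 1 ∧ x ≠ a) ∧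
      (∀ (a : A) (ρ ρ' : T), ρ ≠ ρ' → Disjoint (w a ρ) (w a ρ')) ∧
      (∀ (a x : A) (ρ ρ' : T), x ∈ w a ρ → a ∉ w x ρ') := by
  have hle : ∀ (a : A) (ρ : T), n a ρ ≤
      (Finset.univ.filter (fun x : A => typ x = ρ ∧ blk x = blk a + 1)).card := by
    intro a ρ
    calc n a ρ ≤ ∑ ρ' : T, n a ρ' :=
          Finset.single_le_sum (fun _ _ => Nat.zero_le _) (Finset.mem_univ ρ)
      _ ≤ m * C := hn a
      _ ≤ _ := hblk ρ (blk a + 1)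
  choose w hw1 hw2 using fun a ρ => Finset.exists_subset_card_eq (hle a ρ)
  refine ⟨w, hw2, ?_, ?_, ?_⟩
  · intro a ρ x hx
    have h := Finset.mem_filter.mp (hw1 a ρ hx)
    refine ⟨h.2.1, h.2.2, ?_⟩
    rintro rfl
    have := h.2.2
    have h1 : (1 : ZMod 3) = 0 := by
      have := (left_eq_add).mp this
      exact this
    exact absurd h1 (by decide)
  · intro a ρ ρ' hne
    rw [Finset.disjoint_left]
    intro x hx hx'
    have h1 := (Finset.mem_filter.mp (hw1 a ρ hx)).2.1
    have h2 := (Finset.mem_filter.mp (hw1 a ρ' hx')).2.1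
    exact hne (h1 ▸ h2 ▸ rfl)
  · intro a x ρ ρ' hx ha
    have h1 := (Finset.mem_filter.mp (hw1 a ρ hx)).2.2
    have h2 := (Finset.mem_filter.mp (hw1 x ρ' ha)).2.2
    rw [h1, add_assoc] at h2
    have h3 : (1 + 1 : ZMod 3) = 0 := (left_eq_add).mp h2
    exact absurd h3 (by decide)
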